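/- For every real number x with 0 ≤ x ≤ 1, φ(x) ≤ π(√2 + 1/2)·(√(1 + x) − √(1 − x))/(4 + √(1 + x) + √(1 − x)), where φ(x) = (π(2 − √2)/(π − 2√2))·(√(1 + x) − √(1 − x)) / (√2(4 − π)/(π − 2√2) + √(1 + x) + √(1 − x)). -/

import Mathlib

/-- The upper bound `φ` for `arcsin` obtained by the λ-method of Mitrinović–Vasić. -/
noncomputable def phiBound (x : ℝ) : ℝ :=
  (Real.pi * (2 - Real.sqrt 2) / (Real.pi - 2 * Real.sqrt 2)) *
      (Real.sqrt (1 + x) - Real.sqrt (1 - x)) /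
    (Real.sqrt 2 * (4 - Real.pi) / (Real.pi - 2 * Real.sqrt 2) +
      Real.sqrt (1 + x) + Real.sqrt (1 - x))

theorem phiBound_le_zhu (x : ℝ) (hx : 0 ≤ x) (hx' : x ≤ 1) :
    phiBound x ≤
      Real.pi * (Real.sqrt 2 + 1 / 2) * (Real.sqrt (1 + x) - Real.sqrt (1 - x)) /
        (4 + Real.sqrt (1 + x) + Real.sqrt (1 - x)) := by
  have hp1 : (3.141592 : ℝ) < Real.pi := Real.pi_gt_d6
  have hp2 : Real.pi < 3.15 := Real.pi_lt_d2
  set p := Real.pi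
  set t := Real.sqrt 2 with htdef
  set a := Real.sqrt (1 + x) with hadef
  set b := Real.sqrt (1 - x) with hbdef
  have ht0 : 0 ≤ t := Real.sqrt_nonneg 2
  have ht2 : t ^ 2 = 2 := Real.sq_sqrt (by norm_num)
  have htlow : (1.414 : ℝ) < t := by nlinarith
  have hthigh : t < 1.415 := by nlinarith
  have ha0 : 0 ≤ a := Real.sqrt_nonneg _
  have hb0 : 0 ≤ b := Real.sqrt_nonneg _
  have ha2 : a ^ 2 = 1 + x := Real.sq_sqrt (by linarith)
  have hb2 : b ^ 2 = 1 - x := Real.sq_sqrt (by linarith)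
  have hd : b ≤ a := Real.sqrt_le_sqrt (by linarith)
  have hs : t ≤ a + b := by nlinarith [mul_nonneg ha0 hb0]
  have hden1 : 0 < p - 2 * t := by nlinarith
  have hden2 : 0 < t * (4 - p) / (p - 2 * t) + a + b := by
    have : 0 ≤ t * (4 - p) / (p - 2 * t) :=
      div_nonneg (by nlinarith) hden1.le
    nlinarith
  have hden3 : (0 : ℝ) < 4 + a + b := by nlinarith
  unfold phiBound
  rw [div_le_div_iff₀ hden2 hden3]
  have hp0 : 0 < p := Real.pi_pos
  have hfac : 0 ≤ p * t + p / 2 - 6 := by nlinarith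
  have key : 0 ≤ p * (a - b) * (a + b - t) * (p * t + p / 2 - 6) := by
    have h1 : 0 ≤ a - b := by linarith
    have h2 : 0 ≤ a + b - t := by linarith
    positivity
  have hne : p - 2 * t ≠ 0 := hden1.ne'
  field_simp
  rw [show Real.pi = p from rfl, show √2 = t from rfl, show √(1 + x) = a from rfl, show √(1 - x) = b from rfl, div_le_iff₀ hden1]
  have h0 : 4*p*(p-2*t)*(a-b)*(2-a-b)*(t^2-2) = 0 := by rw [ht2]; ring
  nlinarith [mul_nonneg key hden1.le, h0]
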